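/- With α = ∑_{n=1}^∞ 1/(10↑↑n), q_n = 10↑↑n, and C(n) = ∑_{m>n} (10↑↑n)/(10↑↑m), one has C(n) ≤ 2 q_n / 10^{q_n} for all n ≥ 1. -/

import Mathlib

/-- `tow n = 10↑↑n` for `n ≥ 1` (with `tow 0 = 1`): the `n`-fold power tower of 10s. -/
def tow : ℕ → ℕ
  | 0 => 1
  | n + 1 => 10 ^ tow n

lemma tow_pos (k : ℕ) : 0 < tow k := by
  induction k with
  | zero => simp [tow]
  | succ k ih => simp only [tow]; positivity

lemma two_mul_le_pow (t : ℕ) : 2 * t ≤ 10 ^ t := by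
  induction t with
  | zero => simp
  | succ t ih =>
    have h1 : 1 ≤ 10 ^ t := Nat.one_le_pow _ _ (by norm_num)
    calc 2 * (t + 1) = 2 * t + 2 := by ring
      _ ≤ 10 ^ t + 2 := by omega
      _ ≤ 10 ^ (t + 1) := by
        rw [pow_succ]; omega

lemma tow_succ_ge (k : ℕ) : 2 * tow k ≤ tow (k + 1) := two_mul_le_pow (tow k)

lemma tow_ge (n j : ℕ) : 2 ^ j * tow (n + 1) ≤ tow (n + 1 + j) := by
  induction j with
  | zero => simp
  | succ j ih =>
    have := tow_succ_ge (n + 1 + j)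
    calc 2 ^ (j + 1) * tow (n + 1) = 2 * (2 ^ j * tow (n + 1)) := by ring
      _ ≤ 2 * tow (n + 1 + j) := by omega
      _ ≤ tow (n + 1 + j + 1) := this
      _ = tow (n + 1 + (j + 1)) := by ring_nf

/-- `C(n) = ∑_{m>n} (10↑↑n)/(10↑↑m) ≤ 2 q_n / 10^{q_n}` with `q_n = 10↑↑n`. -/
theorem stmt12 (n : ℕ) (hn : 1 ≤ n) :
    (∑' j : ℕ, (tow n : ℝ) / tow (n + 1 + j)) ≤ 2 * (tow n : ℝ) / (10 : ℝ) ^ (tow n) := by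
  have htow1 : (tow (n + 1) : ℝ) = (10 : ℝ) ^ tow n := by
    simp [tow]
  have hbound : ∀ j : ℕ, (tow n : ℝ) / tow (n + 1 + j)
      ≤ ((tow n : ℝ) / (10 : ℝ) ^ tow n) * (1 / 2) ^ j := by
    intro j
    have h1 : (2 : ℝ) ^ j * tow (n + 1) ≤ (tow (n + 1 + j) : ℝ) := by
      exact_mod_cast tow_ge n j
    have hpos : (0 : ℝ) < 2 ^ j * tow (n + 1) := by
      have := tow_pos (n + 1)
      positivity
    have h2 : (tow n : ℝ) / tow (n + 1 + j) ≤ (tow n : ℝ) / (2 ^ j * tow (n + 1)) := by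
      apply div_le_div_of_nonneg_left _ hpos h1
      positivity
    refine h2.trans_eq ?_
    rw [htow1, div_mul_eq_mul_div, div_eq_div_iff (by positivity) (by positivity)]
    field_simp
    rw [mul_assoc, ← mul_pow]; norm_num
  have hsummable : Summable (fun j : ℕ => ((tow n : ℝ) / (10 : ℝ) ^ tow n) * (1 / 2) ^ j) := by
    apply Summable.mul_left
    exact summable_geometric_of_lt_one (by norm_num) (by norm_num)
  have hle := Summable.tsum_le_tsum hbound ?_ hsummable
  · refine hle.trans_eq ?_
    rw [tsum_mul_left, tsum_geometric_of_lt_one (by norm_num) (by norm_num)]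
    norm_num
    field_simp
  · apply Summable.of_nonneg_of_le _ hbound hsummable
    intro j
    have := tow_pos (n + 1 + j)
    positivity
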